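/- (Theorem 1, invariance) Suppose all parameters of the n-group behavior model are nonnegative (with r, q ∈ [0,1] and θ_l ∈ (0,1]). If a solution of the n-group behavior model has nonnegative initial values, with at least one S_i(0) > 0, and remains defined with total population N(t) > 0 on [0,T], then every component S_i(t), E_i(t), Ia_i(t), Is_i(t), Ih_i(t), R_i(t) is nonnegative for all t ∈ [0,T] and the sum of all components satisfies 0 < N(t) ≤ N(0); that is, the region Ω = { x ∈ ℝ_+^{6n} : 0 ≤ sum of all components of x ≤ N(0) } is positively invariant for the flow of the model. -/

import Mathlib

open Set Finset

/-! ### Auxiliary lemmas -/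

/-- negative part -/
noncomputable def np (x : ℝ) : ℝ := max (-x) 0

lemma np_nonneg (x : ℝ) : 0 ≤ np x := le_max_right _ _
lemma neg_le_np (x : ℝ) : -x ≤ np x := le_max_left _ _
lemma np_le_abs (x : ℝ) : np x ≤ |x| := max_le (neg_le_abs x) (abs_nonneg x)
lemma np_eq_zero_of_nonneg {x : ℝ} (h : 0 ≤ x) : np x = 0 := max_eq_right (by linarith)
lemma np_add_le (x y : ℝ) : np (x + y) ≤ np x + np y := by
  have h1 := neg_le_np x
  have h2 := neg_le_np y
  have h3 := np_nonneg x
  have h4 := np_nonneg y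
  exact max_le (by linarith) (by linarith)
lemma min_eq_neg_np (x : ℝ) : min x 0 = -np x := by
  unfold np
  rcases le_total x 0 with h | h
  · rw [min_eq_left h, max_eq_left (by linarith)]; ring
  · rw [min_eq_right h, max_eq_right (by linarith)]; ring
lemma np_sq_eq (x : ℝ) : np x ^ 2 = (min x 0) ^ 2 := by rw [min_eq_neg_np]; ring
lemma pos_sub_np (x : ℝ) : max x 0 - np x = x := by
  unfold np; rcases le_total x 0 with h | h
  · rw [max_eq_right h, max_eq_left (by linarith)]; ring
  · rw [max_eq_left h, max_eq_right (by linarith)]; ring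
lemma pos_le_abs (x : ℝ) : max x 0 ≤ |x| := max_le (le_abs_self x) (abs_nonneg x)
lemma pos_nonneg (x : ℝ) : 0 ≤ max x 0 := le_max_right _ _

lemma hasDerivAt_minsq (x : ℝ) : HasDerivAt (fun y : ℝ => (min y 0)^2) (2 * min x 0) x := by
  rcases lt_trichotomy x 0 with hx | hx | hx
  · have h1 : HasDerivAt (fun y : ℝ => y^2) (2*x) x := by
      simpa using (hasDerivAt_pow 2 x)
    have heq : (fun y : ℝ => (min y 0)^2) =ᶠ[nhds x] fun y : ℝ => y^2 := by
      filter_upwards [eventually_lt_nhds hx] with y hy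
      rw [min_eq_left hy.le]
    rw [min_eq_left hx.le]
    exact h1.congr_of_eventuallyEq heq
  · subst hx
    rw [min_self, mul_zero]
    rw [hasDerivAt_iff_tendsto_slope]
    have hb : ∀ y : ℝ, ‖slope (fun y : ℝ => (min y 0)^2) 0 y‖ ≤ |y| := by
      intro y
      rcases eq_or_ne y 0 with rfl | hy
      · simp [slope]
      have hsl : slope (fun y : ℝ => (min y 0)^2) 0 y = (min y 0)^2 / y := by
        simp [slope_def_field, div_eq_iff]
      rw [hsl, Real.norm_eq_abs]
      rcases le_total y 0 with h | h
      · rw [min_eq_left h]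
        rw [abs_div, abs_pow]
        rw [div_le_iff₀ (abs_pos.mpr hy)]; nlinarith [abs_nonneg y, sq_abs y]
      · rw [min_eq_right h]; simpa using abs_nonneg y
    have htd : Filter.Tendsto (fun y : ℝ => |y|) (nhdsWithin 0 {(0:ℝ)}ᶜ) (nhds 0) := by
      have := (continuous_abs.tendsto (0:ℝ))
      simpa using this.mono_left nhdsWithin_le_nhds
    exact squeeze_zero_norm hb htd
  · have heq : (fun y : ℝ => (min y 0)^2) =ᶠ[nhds x] fun _ : ℝ => (0:ℝ) := by
      filter_upwards [eventually_gt_nhds hx] with y hy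
      rw [min_eq_right hy.le]; simp
    rw [min_eq_right hx.le, mul_zero]
    exact (hasDerivAt_const x 0).congr_of_eventuallyEq heq

/-- Differential inequality: if `g` has (pointwise existing) derivative `≤ K g`
on `[0,T]` and `g 0 ≤ 0` then `g ≤ 0` on `[0,T]`. -/
lemma nonpos_of_deriv_le_mul {g : ℝ → ℝ} {K T : ℝ}
    (hg : ∀ t ∈ Set.Icc (0:ℝ) T, ∃ d, HasDerivAt g d t ∧ d ≤ K * g t)
    (h0 : g 0 ≤ 0) : ∀ t ∈ Set.Icc (0:ℝ) T, g t ≤ 0 := by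
  intro t ht
  set h : ℝ → ℝ := fun s => g s * Real.exp (-K * s) with hh
  have hderiv : ∀ s ∈ Set.Icc (0:ℝ) T, ∃ d, HasDerivAt h d s ∧ d ≤ 0 := by
    intro s hs
    obtain ⟨d, hd, hdb⟩ := hg s hs
    have h1 : HasDerivAt (fun s : ℝ => Real.exp (-K * s)) (-K * Real.exp (-K * s)) s := by
      have := ((hasDerivAt_id s).const_mul (-K)).exp
      simpa [mul_comm] using this
    refine ⟨(d - K * g s) * Real.exp (-K * s), ?_, ?_⟩
    · have : HasDerivAt h (d * Real.exp (-K * s) + g s * (-K * Real.exp (-K * s))) s := hd.mul h1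
      convert this using 1
      ring
    · have he : (0:ℝ) < Real.exp (-K * s) := Real.exp_pos _
      nlinarith
  have hanti : AntitoneOn h (Set.Icc 0 T) := by
    apply antitoneOn_of_deriv_nonpos (convex_Icc 0 T)
    · intro s hs
      obtain ⟨d, hd, _⟩ := hderiv s hs
      exact hd.continuousAt.continuousWithinAt
    · intro s hs
      rw [interior_Icc] at hs
      obtain ⟨d, hd, _⟩ := hderiv s (Set.mem_Icc_of_Ioo hs)
      exact hd.differentiableAt.differentiableWithinAt
    · intro s hs
      rw [interior_Icc] at hs
      obtain ⟨d, hd, hdb⟩ := hderiv s (Set.mem_Icc_of_Ioo hs)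
      rw [hd.deriv]
      exact hdb
  have h0m : (0:ℝ) ∈ Set.Icc (0:ℝ) T := Set.left_mem_Icc.mpr (le_trans ht.1 ht.2)
  have hle := hanti h0m ht ht.1
  have he : (0:ℝ) < Real.exp (-K * t) := Real.exp_pos _
  have he0 : (0:ℝ) < Real.exp (-K * 0) := Real.exp_pos _
  simp only [hh] at hle
  nlinarith

/-- splitting bound for `-(x/Nt * W)`. -/
lemma div_mul_bound {x Nt W UB LB B G c : ℝ} (hc : 0 < c) (hcN : c ≤ Nt)
    (hxB : |x| ≤ B) (hnp : np x ≤ G) (hG : 0 ≤ G) (hUB : 0 ≤ UB) (hLB : 0 ≤ LB)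
    (hWub : W ≤ UB) (hWlb : -W ≤ LB) :
    -(x / Nt * W) ≤ G / c * UB + B / c * LB := by
  have hNt : 0 < Nt := lt_of_lt_of_le hc hcN
  have hB : 0 ≤ B := le_trans (abs_nonneg x) hxB
  have key : -(x / Nt * W) = (np x / Nt) * W + (max x 0 / Nt) * (-W) := by
    field_simp
    linear_combination W * pos_sub_np x
  rw [key]
  have h1 : (np x / Nt) * W ≤ (np x / Nt) * UB :=
    mul_le_mul_of_nonneg_left hWub (div_nonneg (np_nonneg x) hNt.le)
  have h2 : (np x / Nt) * UB ≤ (G / c) * UB :=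
    mul_le_mul_of_nonneg_right (div_le_div₀ hG hnp hc hcN) hUB
  have h3 : (max x 0 / Nt) * (-W) ≤ (max x 0 / Nt) * LB :=
    mul_le_mul_of_nonneg_left hWlb (div_nonneg (pos_nonneg x) hNt.le)
  have h4 : (max x 0 / Nt) * LB ≤ (B / c) * LB :=
    mul_le_mul_of_nonneg_right (div_le_div₀ hB (le_trans (pos_le_abs x) hxB) hc hcN) hLB
  linarith

lemma div_mul_bound_nonpos {x Nt W LB B c : ℝ} (hc : 0 < c) (hcN : c ≤ Nt)
    (hx : x ≤ 0) (hxB : |x| ≤ B) (hLB : 0 ≤ LB) (hWlb : -W ≤ LB) :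
    x / Nt * W ≤ B / c * LB := by
  have hNt : 0 < Nt := lt_of_lt_of_le hc hcN
  have hB : 0 ≤ B := le_trans (abs_nonneg x) hxB
  have key : x / Nt * W = (np x / Nt) * (-W) := by
    unfold np
    rw [max_eq_left (by linarith)]
    field_simp
  rw [key]
  have h3 : (np x / Nt) * (-W) ≤ (np x / Nt) * LB :=
    mul_le_mul_of_nonneg_left hWlb (div_nonneg (np_nonneg x) hNt.le)
  have h4 : (np x / Nt) * LB ≤ (B / c) * LB :=
    mul_le_mul_of_nonneg_right (div_le_div₀ hB (le_trans (np_le_abs x) hxB) hc hcN) hLB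
  linarith

lemma term_bd {x D A G : ℝ} (hA : 0 ≤ A) (hG : 0 ≤ G) (hxG : np x ≤ G)
    (h : x ≤ 0 → -D ≤ A * G) : 2 * min x 0 * D ≤ 2 * (A * G ^ 2) := by
  rcases le_or_gt x 0 with hx | hx
  · have hmin : min x 0 = -np x := min_eq_neg_np x
    have h1 : np x * (-D) ≤ np x * (A * G) := mul_le_mul_of_nonneg_left (h hx) (np_nonneg x)
    have h2 : np x * (A * G) ≤ G * (A * G) := mul_le_mul_of_nonneg_right hxG (mul_nonneg hA hG)
    rw [hmin]; nlinarith
  · rw [min_eq_right hx.le, mul_zero, zero_mul]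
    positivity

lemma six_sq (a b c d e f : ℝ) :
    (a + b + c + d + e + f)^2 ≤ 6 * (a^2 + b^2 + c^2 + d^2 + e^2 + f^2) := by
  nlinarith [sq_nonneg (a-b), sq_nonneg (a-c), sq_nonneg (a-d), sq_nonneg (a-e), sq_nonneg (a-f),
    sq_nonneg (b-c), sq_nonneg (b-d), sq_nonneg (b-e), sq_nonneg (b-f),
    sq_nonneg (c-d), sq_nonneg (c-e), sq_nonneg (c-f),
    sq_nonneg (d-e), sq_nonneg (d-f), sq_nonneg (e-f)]

lemma nonneg_of_sq_sum_six {a b c d e f : ℝ}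
    (h : (min a 0)^2 + (min b 0)^2 + (min c 0)^2 + (min d 0)^2 + (min e 0)^2 + (min f 0)^2 = 0) :
    0 ≤ a ∧ 0 ≤ b ∧ 0 ≤ c ∧ 0 ≤ d ∧ 0 ≤ e ∧ 0 ≤ f := by
  have key : ∀ x : ℝ, (min x 0)^2 = 0 → 0 ≤ x := by
    intro x hx
    have := sq_eq_zero_iff.mp hx
    exact min_eq_right_iff.mp this
  refine ⟨key a ?_, key b ?_, key c ?_, key d ?_, key e ?_, key f ?_⟩ <;>
    nlinarith [sq_nonneg (min a 0), sq_nonneg (min b 0), sq_nonneg (min c 0),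
      sq_nonneg (min d 0), sq_nonneg (min e 0), sq_nonneg (min f 0)]



/-- The influence term `T_i(X)` of the `n`-group behavior model:
`T_i(X) = (X_{i-1}/N) Σ_{j≥i} c^B_{j,i-1} N_j + (X_{i+1}/N) Σ_{j≤i} c^B_{j,i+1} N_j
          − (X_i/N) Σ_{j≠i} c^B_{j,i} N_j`,
where terms whose indices fall outside `1,…,n` are zero. Groups are indexed by
`i ∈ Finset.Icc 1 n ⊆ ℕ`. -/
noncomputable def influenceTerm (n : ℕ) (cB : ℕ → ℕ → ℝ) (Ngrp : ℕ → ℝ) (Ntot : ℝ)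
    (X : ℕ → ℝ) (i : ℕ) : ℝ :=
  (if 2 ≤ i then (X (i - 1) / Ntot) * ∑ j ∈ Finset.Icc i n, cB j (i - 1) * Ngrp j else 0)
    + (if i + 1 ≤ n then (X (i + 1) / Ntot) * ∑ j ∈ Finset.Icc 1 i, cB j (i + 1) * Ngrp j
        else 0)
    - (X i / Ntot) * ∑ j ∈ (Finset.Icc 1 n).erase i, cB j i * Ngrp j

/-- The force of infection `λ_i` of the `n`-group behavior model:
`λ_i = θ_l · c_i^A · (S_i/N) · Σ_j c_j^A (β_a Ia_j + β_i Is_j + β_h Ih_j)`, where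
`c_j^A = exp(−a_j Σ_k Ih_k / N)`. -/
noncomputable def forceOfInfection (n : ℕ) (βa βi βh θl : ℝ) (a : ℕ → ℝ) (Ntot : ℝ)
    (S Ia Is Ih : ℕ → ℝ) (i : ℕ) : ℝ :=
  θl * Real.exp (-a i * (∑ k ∈ Finset.Icc 1 n, Ih k) / Ntot) * (S i / Ntot) *
    ∑ j ∈ Finset.Icc 1 n,
      Real.exp (-a j * (∑ k ∈ Finset.Icc 1 n, Ih k) / Ntot) *
        (βa * Ia j + βi * Is j + βh * Ih j)

lemma sum_influenceTerm (n : ℕ) (cB : ℕ → ℕ → ℝ) (Ngrp : ℕ → ℝ) (Nt : ℝ) (X : ℕ → ℝ) :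
    ∑ i ∈ Finset.Icc 1 n, influenceTerm n cB Ngrp Nt X i = 0 := by
  classical
  set h : ℕ → ℝ := fun m => (X m / Nt) * ∑ j ∈ Finset.Icc (m+1) n, cB j m * Ngrp j with hh
  set k : ℕ → ℝ := fun m => (X m / Nt) * ∑ j ∈ Finset.Icc 1 (m-1), cB j m * Ngrp j with hk
  set F1 : ℕ → ℝ := fun i =>
    if 2 ≤ i then (X (i - 1) / Nt) * ∑ j ∈ Finset.Icc i n, cB j (i - 1) * Ngrp j else 0
    with hF1
  set F2 : ℕ → ℝ := fun i =>
    if i + 1 ≤ n then (X (i + 1) / Nt) * ∑ j ∈ Finset.Icc 1 i, cB j (i + 1) * Ngrp j else 0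
    with hF2
  have hA : ∑ i ∈ Finset.Icc 1 n, F1 i = ∑ m ∈ Finset.Icc 1 n, h m := by
    have e1 : ∑ i ∈ Finset.Icc 2 n, F1 i = ∑ i ∈ Finset.Icc 1 n, F1 i :=
      Finset.sum_subset (Finset.Icc_subset_Icc_left (by norm_num))
        (fun x hx hx' => by
          simp only [Finset.mem_Icc] at hx hx'
          simp only [hF1, hF2]
          rw [if_neg (by omega)])
    have e2 : ∑ i ∈ Finset.Icc 2 n, F1 i = ∑ m ∈ Finset.Icc 1 (n-1), h m := by
      apply Finset.sum_nbij' (i := fun m => m - 1) (j := fun m => m + 1)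
      · intro a ha; simp only [Finset.mem_Icc] at ha ⊢; omega
      · intro a ha; simp only [Finset.mem_Icc] at ha ⊢; omega
      · intro a ha; simp only [Finset.mem_Icc] at ha; omega
      · intro a _; omega
      · intro a ha
        simp only [Finset.mem_Icc] at ha
        simp only [hF1, hh]
        rw [if_pos ha.1]
        rw [(by omega : a - 1 + 1 = a)]
    have e3 : ∑ m ∈ Finset.Icc 1 (n-1), h m = ∑ m ∈ Finset.Icc 1 n, h m :=
      Finset.sum_subset (Finset.Icc_subset_Icc_right (Nat.sub_le n 1))
        (fun x hx hx' => by
          simp only [Finset.mem_Icc] at hx hx'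
          simp only [hh, hk]
          rw [Finset.Icc_eq_empty_of_lt (by omega : n < x + 1)]
          simp)
    rw [← e1, e2, e3]
  have hB : ∑ i ∈ Finset.Icc 1 n, F2 i = ∑ m ∈ Finset.Icc 1 n, k m := by
    have e1 : ∑ i ∈ Finset.Icc 1 (n-1), F2 i = ∑ i ∈ Finset.Icc 1 n, F2 i :=
      Finset.sum_subset (Finset.Icc_subset_Icc_right (Nat.sub_le n 1))
        (fun x hx hx' => by
          simp only [Finset.mem_Icc] at hx hx'
          simp only [hF1, hF2]
          rw [if_neg (by omega)])
    have e2 : ∑ i ∈ Finset.Icc 1 (n-1), F2 i = ∑ m ∈ Finset.Icc 2 n, k m := by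
      apply Finset.sum_nbij' (i := fun m => m + 1) (j := fun m => m - 1)
      · intro a ha; simp only [Finset.mem_Icc] at ha ⊢; omega
      · intro a ha; simp only [Finset.mem_Icc] at ha ⊢; omega
      · intro a _; omega
      · intro a ha; simp only [Finset.mem_Icc] at ha; omega
      · intro a ha
        simp only [Finset.mem_Icc] at ha
        simp only [hF2, hk]
        rw [if_pos (by omega : a + 1 ≤ n)]
        rw [(by omega : a + 1 - 1 = a)]
    have e3 : ∑ m ∈ Finset.Icc 2 n, k m = ∑ m ∈ Finset.Icc 1 n, k m :=
      Finset.sum_subset (Finset.Icc_subset_Icc_left (by norm_num))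
        (fun x hx hx' => by
          simp only [Finset.mem_Icc] at hx hx'
          simp only [hh, hk]
          rw [(by omega : x - 1 = 0), Finset.Icc_eq_empty_of_lt (by omega : (0:ℕ) < 1)]
          simp)
    rw [← e1, e2, e3]
  have hC : ∀ m ∈ Finset.Icc 1 n,
      (X m / Nt) * ∑ j ∈ (Finset.Icc 1 n).erase m, cB j m * Ngrp j = h m + k m := by
    intro m hm
    simp only [Finset.mem_Icc] at hm
    have hsplit : (Finset.Icc 1 n).erase m = Finset.Icc 1 (m-1) ∪ Finset.Icc (m+1) n := by
      ext x
      simp only [Finset.mem_erase, Finset.mem_Icc, Finset.mem_union]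
      omega
    have hdisj : Disjoint (Finset.Icc 1 (m-1)) (Finset.Icc (m+1) n) := by
      rw [Finset.disjoint_left]
      intro x hx hx'
      simp only [Finset.mem_Icc] at hx hx'
      omega
    rw [hsplit, Finset.sum_union hdisj]
    simp only [hh, hk]
    ring
  have : ∑ i ∈ Finset.Icc 1 n, influenceTerm n cB Ngrp Nt X i
      = ∑ i ∈ Finset.Icc 1 n, (F1 i + F2 i
        - (X i / Nt) * ∑ j ∈ (Finset.Icc 1 n).erase i, cB j i * Ngrp j) := rfl
  rw [this, Finset.sum_sub_distrib, Finset.sum_add_distrib, hA, hB,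
    Finset.sum_congr rfl hC, Finset.sum_add_distrib]
  ring

set_option maxHeartbeats 1000000 in
/-- **Theorem 1 (invariance of the region Ω).**
Suppose all parameters of the `n`-group behavior model are nonnegative (with
`r, q ∈ [0,1]` and `θ_l ∈ (0,1]`). If a solution of the `n`-group behavior model has
nonnegative initial values, with at least one `S_i(0) > 0`, and remains defined with
total population `N(t) > 0` on `[0,T]`, then every component
`S_i(t), E_i(t), Ia_i(t), Is_i(t), Ih_i(t), R_i(t)` is nonnegative for all `t ∈ [0,T]`
and the total population satisfies `0 < N(t) ≤ N(0)`; i.e. the region `Ω` is positively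
invariant for the flow of the model. -/
theorem region_positively_invariant
    (n : ℕ) (hn : 1 ≤ n)
    (βa βi βh σe σi γa γh δh ξ θl r q : ℝ) (a : ℕ → ℝ) (cB : ℕ → ℕ → ℝ)
    (hβa : 0 ≤ βa) (hβi : 0 ≤ βi) (hβh : 0 ≤ βh) (hσe : 0 ≤ σe) (hσi : 0 ≤ σi)
    (hγa : 0 ≤ γa) (hγh : 0 ≤ γh) (hδh : 0 ≤ δh) (hξ : 0 ≤ ξ)
    (hr : r ∈ Set.Icc (0 : ℝ) 1) (hq : q ∈ Set.Icc (0 : ℝ) 1)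
    (hθl : θl ∈ Set.Ioc (0 : ℝ) 1)
    (ha : ∀ i, 0 ≤ a i) (hcB : ∀ j i, j ≠ i → 0 ≤ cB j i)
    (T : ℝ) (hT : 0 ≤ T)
    (S E Ia Is Ih R : ℕ → ℝ → ℝ)
    (Ntot : ℝ → ℝ)
    (hNtot : ∀ t, Ntot t =
      ∑ i ∈ Finset.Icc 1 n, (S i t + E i t + Ia i t + Is i t + Ih i t + R i t))
    (hNpos : ∀ t ∈ Set.Icc (0 : ℝ) T, 0 < Ntot t)
    (hinit : ∀ i ∈ Finset.Icc 1 n,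
      0 ≤ S i 0 ∧ 0 ≤ E i 0 ∧ 0 ≤ Ia i 0 ∧ 0 ≤ Is i 0 ∧ 0 ≤ Ih i 0 ∧ 0 ≤ R i 0)
    (hSpos : ∃ i ∈ Finset.Icc 1 n, 0 < S i 0)
    (hS : ∀ i ∈ Finset.Icc 1 n, ∀ t ∈ Set.Icc (0 : ℝ) T,
      HasDerivAt (S i)
        (ξ * R i t
          - forceOfInfection n βa βi βh θl a (Ntot t)
              (fun j => S j t) (fun j => Ia j t) (fun j => Is j t) (fun j => Ih j t) i
          + influenceTerm n cB
              (fun j => S j t + E j t + Ia j t + Is j t + Ih j t + R j t) (Ntot t)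
              (fun j => S j t) i) t)
    (hE : ∀ i ∈ Finset.Icc 1 n, ∀ t ∈ Set.Icc (0 : ℝ) T,
      HasDerivAt (E i)
        (forceOfInfection n βa βi βh θl a (Ntot t)
            (fun j => S j t) (fun j => Ia j t) (fun j => Is j t) (fun j => Ih j t) i
          - σe * E i t
          + influenceTerm n cB
              (fun j => S j t + E j t + Ia j t + Is j t + Ih j t + R j t) (Ntot t)
              (fun j => E j t) i) t)
    (hIa : ∀ i ∈ Finset.Icc 1 n, ∀ t ∈ Set.Icc (0 : ℝ) T,
      HasDerivAt (Ia i)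
        ((1 - r) * σe * E i t - γa * Ia i t
          + influenceTerm n cB
              (fun j => S j t + E j t + Ia j t + Is j t + Ih j t + R j t) (Ntot t)
              (fun j => Ia j t) i) t)
    (hIs : ∀ i ∈ Finset.Icc 1 n, ∀ t ∈ Set.Icc (0 : ℝ) T,
      HasDerivAt (Is i)
        (r * σe * E i t - σi * Is i t
          + influenceTerm n cB
              (fun j => S j t + E j t + Ia j t + Is j t + Ih j t + R j t) (Ntot t)
              (fun j => Is j t) i) t)
    (hIh : ∀ i ∈ Finset.Icc 1 n, ∀ t ∈ Set.Icc (0 : ℝ) T,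
      HasDerivAt (Ih i)
        (q * σi * Is i t - (γh + δh) * Ih i t
          + influenceTerm n cB
              (fun j => S j t + E j t + Ia j t + Is j t + Ih j t + R j t) (Ntot t)
              (fun j => Ih j t) i) t)
    (hR : ∀ i ∈ Finset.Icc 1 n, ∀ t ∈ Set.Icc (0 : ℝ) T,
      HasDerivAt (R i)
        (γa * Ia i t + (1 - q) * σi * Is i t + γh * Ih i t - ξ * R i t
          + influenceTerm n cB
              (fun j => S j t + E j t + Ia j t + Is j t + Ih j t + R j t) (Ntot t)
              (fun j => R j t) i) t) :
    (∀ i ∈ Finset.Icc 1 n, ∀ t ∈ Set.Icc (0 : ℝ) T,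
        0 ≤ S i t ∧ 0 ≤ E i t ∧ 0 ≤ Ia i t ∧ 0 ≤ Is i t ∧ 0 ≤ Ih i t ∧ 0 ≤ R i t)
      ∧ (∀ t ∈ Set.Icc (0 : ℝ) T, 0 < Ntot t ∧ Ntot t ≤ Ntot 0) := by
  
  classical
  obtain ⟨hr0, hr1⟩ := hr
  obtain ⟨hq0, hq1⟩ := hq
  obtain ⟨hθ0, hθ1⟩ := hθl
  have hmem0 : (0:ℝ) ∈ Set.Icc (0:ℝ) T := Set.left_mem_Icc.mpr hT
  have hcard : (((Finset.Icc 1 n).card : ℕ) : ℝ) = (n:ℝ) := by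
    rw [Nat.card_Icc]; push_cast [Nat.add_sub_cancel]; ring
  -- continuity of components on [0,T]
  have hScont : ∀ i ∈ Finset.Icc 1 n, ContinuousOn (S i) (Set.Icc (0:ℝ) T) :=
    fun i hi s hs => ((hS i hi s hs).continuousAt).continuousWithinAt
  have hEcont : ∀ i ∈ Finset.Icc 1 n, ContinuousOn (E i) (Set.Icc (0:ℝ) T) :=
    fun i hi s hs => ((hE i hi s hs).continuousAt).continuousWithinAt
  have hIacont : ∀ i ∈ Finset.Icc 1 n, ContinuousOn (Ia i) (Set.Icc (0:ℝ) T) :=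
    fun i hi s hs => ((hIa i hi s hs).continuousAt).continuousWithinAt
  have hIscont : ∀ i ∈ Finset.Icc 1 n, ContinuousOn (Is i) (Set.Icc (0:ℝ) T) :=
    fun i hi s hs => ((hIs i hi s hs).continuousAt).continuousWithinAt
  have hIhcont : ∀ i ∈ Finset.Icc 1 n, ContinuousOn (Ih i) (Set.Icc (0:ℝ) T) :=
    fun i hi s hs => ((hIh i hi s hs).continuousAt).continuousWithinAt
  have hRcont : ∀ i ∈ Finset.Icc 1 n, ContinuousOn (R i) (Set.Icc (0:ℝ) T) :=
    fun i hi s hs => ((hR i hi s hs).continuousAt).continuousWithinAt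
  -- a uniform bound B on all components
  have hMcont : ContinuousOn (fun t => ∑ i ∈ Finset.Icc 1 n,
      (|S i t| + |E i t| + |Ia i t| + |Is i t| + |Ih i t| + |R i t|)) (Set.Icc (0:ℝ) T) := by
    apply continuousOn_finset_sum
    intro i hi
    exact ((((((hScont i hi).abs.add (hEcont i hi).abs).add (hIacont i hi).abs).add
      (hIscont i hi).abs).add (hIhcont i hi).abs).add (hRcont i hi).abs)
  obtain ⟨B, hBbd⟩ := isCompact_Icc.exists_bound_of_continuousOn hMcont
  have hBM : ∀ t ∈ Set.Icc (0:ℝ) T, (∑ i ∈ Finset.Icc 1 n,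
      (|S i t| + |E i t| + |Ia i t| + |Is i t| + |Ih i t| + |R i t|)) ≤ B := by
    intro t ht
    have h := hBbd t ht
    rw [Real.norm_eq_abs] at h
    exact (le_abs_self _).trans h
  have habs : ∀ t ∈ Set.Icc (0:ℝ) T, ∀ i ∈ Finset.Icc 1 n,
      |S i t| + |E i t| + |Ia i t| + |Is i t| + |Ih i t| + |R i t| ≤ B := by
    intro t ht i hi
    refine le_trans (Finset.single_le_sum
      (f := fun i => |S i t| + |E i t| + |Ia i t| + |Is i t| + |Ih i t| + |R i t|)
      (fun j _ => by positivity) hi) (hBM t ht)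
  have hB0 : 0 ≤ B := le_trans (Finset.sum_nonneg (fun j _ => by positivity)) (hBM 0 hmem0)
  have hSB : ∀ t ∈ Set.Icc (0:ℝ) T, ∀ i ∈ Finset.Icc 1 n, |S i t| ≤ B := by
    intro t ht i hi
    have h := habs t ht i hi
    linarith [abs_nonneg (E i t), abs_nonneg (Ia i t), abs_nonneg (Is i t), abs_nonneg (Ih i t), abs_nonneg (R i t)]
  have hEB : ∀ t ∈ Set.Icc (0:ℝ) T, ∀ i ∈ Finset.Icc 1 n, |E i t| ≤ B := by
    intro t ht i hi
    have h := habs t ht i hi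
    linarith [abs_nonneg (S i t), abs_nonneg (Ia i t), abs_nonneg (Is i t), abs_nonneg (Ih i t), abs_nonneg (R i t)]
  have hIaB : ∀ t ∈ Set.Icc (0:ℝ) T, ∀ i ∈ Finset.Icc 1 n, |Ia i t| ≤ B := by
    intro t ht i hi
    have h := habs t ht i hi
    linarith [abs_nonneg (S i t), abs_nonneg (E i t), abs_nonneg (Is i t), abs_nonneg (Ih i t), abs_nonneg (R i t)]
  have hIsB : ∀ t ∈ Set.Icc (0:ℝ) T, ∀ i ∈ Finset.Icc 1 n, |Is i t| ≤ B := by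
    intro t ht i hi
    have h := habs t ht i hi
    linarith [abs_nonneg (S i t), abs_nonneg (E i t), abs_nonneg (Ia i t), abs_nonneg (Ih i t), abs_nonneg (R i t)]
  have hIhB : ∀ t ∈ Set.Icc (0:ℝ) T, ∀ i ∈ Finset.Icc 1 n, |Ih i t| ≤ B := by
    intro t ht i hi
    have h := habs t ht i hi
    linarith [abs_nonneg (S i t), abs_nonneg (E i t), abs_nonneg (Ia i t), abs_nonneg (Is i t), abs_nonneg (R i t)]
  have hRB : ∀ t ∈ Set.Icc (0:ℝ) T, ∀ i ∈ Finset.Icc 1 n, |R i t| ≤ B := by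
    intro t ht i hi
    have h := habs t ht i hi
    linarith [abs_nonneg (S i t), abs_nonneg (E i t), abs_nonneg (Ia i t), abs_nonneg (Is i t), abs_nonneg (Ih i t)]
  have hNgB : ∀ t ∈ Set.Icc (0:ℝ) T, ∀ j ∈ Finset.Icc 1 n,
      |S j t + E j t + Ia j t + Is j t + Ih j t + R j t| ≤ B := by
    intro t ht j hj
    have h := habs t ht j hj
    have b1 := abs_add_le (S j t + E j t + Ia j t + Is j t + Ih j t) (R j t)
    have b2 := abs_add_le (S j t + E j t + Ia j t + Is j t) (Ih j t)
    have b3 := abs_add_le (S j t + E j t + Ia j t) (Is j t)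
    have b4 := abs_add_le (S j t + E j t) (Ia j t)
    have b5 := abs_add_le (S j t) (E j t)
    linarith
  -- minimum of the total population
  have hNtotEq : Ntot = fun t => ∑ i ∈ Finset.Icc 1 n,
      (S i t + E i t + Ia i t + Is i t + Ih i t + R i t) := funext hNtot
  have hNtotCont : ContinuousOn Ntot (Set.Icc (0:ℝ) T) := by
    rw [hNtotEq]
    apply continuousOn_finset_sum
    intro i hi
    exact (((((hScont i hi).add (hEcont i hi)).add (hIacont i hi)).add
      (hIscont i hi)).add (hIhcont i hi)).add (hRcont i hi)
  obtain ⟨t0, ht0, hmin⟩ := isCompact_Icc.exists_isMinOn (Set.nonempty_of_mem hmem0) hNtotCont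
  set c := Ntot t0 with hcdef
  have hc : 0 < c := hNpos t0 ht0
  have hcN : ∀ t ∈ Set.Icc (0:ℝ) T, c ≤ Ntot t := fun t ht => isMinOn_iff.mp hmin t ht
  clear_value c
  -- constants
  set CB := ∑ j ∈ Finset.Icc 1 n, ∑ k ∈ Finset.Icc 1 n, |cB j k| with hCBdef
  have hCB0 : 0 ≤ CB := Finset.sum_nonneg fun j _ => Finset.sum_nonneg fun k _ => abs_nonneg _
  have hCBle : ∀ j ∈ Finset.Icc 1 n, ∀ k ∈ Finset.Icc 1 n, |cB j k| ≤ CB := by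
    intro j hj k hk
    calc |cB j k| ≤ ∑ k ∈ Finset.Icc 1 n, |cB j k| :=
          Finset.single_le_sum (f := fun k => |cB j k|) (fun _ _ => abs_nonneg _) hk
    _ ≤ CB := Finset.single_le_sum
          (f := fun j => ∑ k ∈ Finset.Icc 1 n, |cB j k|)
          (fun _ _ => Finset.sum_nonneg fun _ _ => abs_nonneg _) hj
  clear_value CB
  set Aa := ∑ j ∈ Finset.Icc 1 n, a j with hAadef
  have hAale : ∀ j ∈ Finset.Icc 1 n, a j ≤ Aa := fun j hj =>
    Finset.single_le_sum (fun k _ => ha k) hj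
  have hAa0 : 0 ≤ Aa := Finset.sum_nonneg fun k _ => ha k
  clear_value Aa
  set EB := Real.exp (Aa * ((n:ℝ) * B) / c) with hEBdef
  have hEB0 : 0 < EB := Real.exp_pos _
  clear_value EB
  -- the total negative-part function G
  set G : ℝ → ℝ := fun t => ∑ i ∈ Finset.Icc 1 n, (np (S i t) + np (E i t) + np (Ia i t) + np (Is i t) + np (Ih i t) + np (R i t)) with hGdef
  clear_value G
  have hG0 : ∀ t, 0 ≤ G t := by
    intro t
    simp only [hGdef]
    apply Finset.sum_nonneg
    intro i _
    have := np_nonneg (S i t); have := np_nonneg (E i t); have := np_nonneg (Ia i t)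
    have := np_nonneg (Is i t); have := np_nonneg (Ih i t); have := np_nonneg (R i t)
    linarith
  have hsix : ∀ t, ∀ i ∈ Finset.Icc 1 n, (np (S i t) + np (E i t) + np (Ia i t) + np (Is i t) + np (Ih i t) + np (R i t)) ≤ G t := by
    intro t i hi
    simp only [hGdef]
    apply Finset.single_le_sum (f := fun i => (np (S i t) + np (E i t) + np (Ia i t) + np (Is i t) + np (Ih i t) + np (R i t))) _ hi
    intro j _
    show 0 ≤ np (S j t) + np (E j t) + np (Ia j t) + np (Is j t) + np (Ih j t) + np (R j t)
    have := np_nonneg (S j t); have := np_nonneg (E j t); have := np_nonneg (Ia j t)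
    have := np_nonneg (Is j t); have := np_nonneg (Ih j t); have := np_nonneg (R j t)
    linarith
  have hnpS : ∀ t, ∀ i ∈ Finset.Icc 1 n, np (S i t) ≤ G t := by
    intro t i hi
    have h := hsix t i hi
    linarith [np_nonneg (E i t), np_nonneg (Ia i t), np_nonneg (Is i t), np_nonneg (Ih i t), np_nonneg (R i t)]
  have hnpE : ∀ t, ∀ i ∈ Finset.Icc 1 n, np (E i t) ≤ G t := by
    intro t i hi
    have h := hsix t i hi
    linarith [np_nonneg (S i t), np_nonneg (Ia i t), np_nonneg (Is i t), np_nonneg (Ih i t), np_nonneg (R i t)]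
  have hnpIa : ∀ t, ∀ i ∈ Finset.Icc 1 n, np (Ia i t) ≤ G t := by
    intro t i hi
    have h := hsix t i hi
    linarith [np_nonneg (S i t), np_nonneg (E i t), np_nonneg (Is i t), np_nonneg (Ih i t), np_nonneg (R i t)]
  have hnpIs : ∀ t, ∀ i ∈ Finset.Icc 1 n, np (Is i t) ≤ G t := by
    intro t i hi
    have h := hsix t i hi
    linarith [np_nonneg (S i t), np_nonneg (E i t), np_nonneg (Ia i t), np_nonneg (Ih i t), np_nonneg (R i t)]
  have hnpIh : ∀ t, ∀ i ∈ Finset.Icc 1 n, np (Ih i t) ≤ G t := by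
    intro t i hi
    have h := hsix t i hi
    linarith [np_nonneg (S i t), np_nonneg (E i t), np_nonneg (Ia i t), np_nonneg (Is i t), np_nonneg (R i t)]
  have hnpR : ∀ t, ∀ i ∈ Finset.Icc 1 n, np (R i t) ≤ G t := by
    intro t i hi
    have h := hsix t i hi
    linarith [np_nonneg (S i t), np_nonneg (E i t), np_nonneg (Ia i t), np_nonneg (Is i t), np_nonneg (Ih i t)]
  have hNgnp : ∀ t, ∀ j ∈ Finset.Icc 1 n,
      np (S j t + E j t + Ia j t + Is j t + Ih j t + R j t) ≤ G t := by
    intro t j hj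
    have h1 := np_add_le (S j t + E j t + Ia j t + Is j t + Ih j t) (R j t)
    have h2 := np_add_le (S j t + E j t + Ia j t + Is j t) (Ih j t)
    have h3 := np_add_le (S j t + E j t + Ia j t) (Is j t)
    have h4 := np_add_le (S j t + E j t) (Ia j t)
    have h5 := np_add_le (S j t) (E j t)
    have h := hsix t j hj
    linarith
  -- bounds on the behavioural coupling sums
  have hQbd : ∀ t ∈ Set.Icc (0:ℝ) T, ∀ (Q : Finset ℕ) (kk : ℕ), Q ⊆ Finset.Icc 1 n →
      kk ∈ Finset.Icc 1 n → (∀ j ∈ Q, j ≠ kk) →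
      (∑ j ∈ Q, cB j kk * (S j t + E j t + Ia j t + Is j t + Ih j t + R j t)) ≤ CB * ((n:ℝ) * B) ∧
      -(∑ j ∈ Q, cB j kk * (S j t + E j t + Ia j t + Is j t + Ih j t + R j t)) ≤
        CB * ((n:ℝ) * G t) := by
    intro t ht Q kk hQ hkk hQk
    have hcardQ : ((Q.card : ℕ) : ℝ) ≤ (n:ℝ) := by
      have h := Finset.card_le_card hQ
      rw [Nat.card_Icc] at h
      have h2 : Q.card ≤ n := by omega
      exact_mod_cast h2
    constructor
    · calc (∑ j ∈ Q, cB j kk * (S j t + E j t + Ia j t + Is j t + Ih j t + R j t))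
          ≤ Q.card • (CB * B) := by
            apply Finset.sum_le_card_nsmul
            intro j hj
            calc cB j kk * (S j t + E j t + Ia j t + Is j t + Ih j t + R j t)
                ≤ |cB j kk * (S j t + E j t + Ia j t + Is j t + Ih j t + R j t)| := le_abs_self _
              _ = |cB j kk| * |S j t + E j t + Ia j t + Is j t + Ih j t + R j t| := abs_mul _ _
              _ ≤ CB * B := mul_le_mul (hCBle j (hQ hj) kk hkk) (hNgB t ht j (hQ hj))
                  (abs_nonneg _) hCB0
        _ = ((Q.card : ℕ) : ℝ) * (CB * B) := nsmul_eq_mul _ _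
        _ ≤ (n:ℝ) * (CB * B) := mul_le_mul_of_nonneg_right hcardQ (mul_nonneg hCB0 hB0)
        _ = CB * ((n:ℝ) * B) := by ring
    · rw [← Finset.sum_neg_distrib]
      calc (∑ j ∈ Q, -(cB j kk * (S j t + E j t + Ia j t + Is j t + Ih j t + R j t)))
          ≤ Q.card • (CB * G t) := by
            apply Finset.sum_le_card_nsmul
            intro j hj
            have hcb0 : 0 ≤ cB j kk := hcB j kk (hQk j hj)
            have e1 : -(cB j kk * (S j t + E j t + Ia j t + Is j t + Ih j t + R j t))
                = cB j kk * (-(S j t + E j t + Ia j t + Is j t + Ih j t + R j t)) := by ring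
            rw [e1]
            calc cB j kk * (-(S j t + E j t + Ia j t + Is j t + Ih j t + R j t))
                ≤ cB j kk * np (S j t + E j t + Ia j t + Is j t + Ih j t + R j t) :=
                  mul_le_mul_of_nonneg_left (neg_le_np _) hcb0
              _ ≤ CB * G t := mul_le_mul (le_trans (le_abs_self _) (hCBle j (hQ hj) kk hkk))
                  (hNgnp t j (hQ hj)) (np_nonneg _) hCB0
        _ = ((Q.card : ℕ) : ℝ) * (CB * G t) := nsmul_eq_mul _ _
        _ ≤ (n:ℝ) * (CB * G t) := mul_le_mul_of_nonneg_right hcardQ (mul_nonneg hCB0 (hG0 t))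
        _ = CB * ((n:ℝ) * G t) := by ring
  -- influence term bound
  set KT := 2 * (CB * ((n:ℝ) * B)) / c + 3 * (B * (CB * ((n:ℝ) * 1))) / c with hKTdef
  clear_value KT
  have hUB0 : 0 ≤ CB * ((n:ℝ) * B) := mul_nonneg hCB0 (mul_nonneg (Nat.cast_nonneg n) hB0)
  have hKT0 : 0 ≤ KT := by
    rw [hKTdef]
    have h2 : 0 ≤ B * (CB * ((n:ℝ) * 1)) :=
      mul_nonneg hB0 (mul_nonneg hCB0 (by positivity))
    have := div_nonneg (by linarith : (0:ℝ) ≤ 2 * (CB * ((n:ℝ) * B))) hc.le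
    have := div_nonneg (by linarith : (0:ℝ) ≤ 3 * (B * (CB * ((n:ℝ) * 1)))) hc.le
    linarith
  have hinfl : ∀ t ∈ Set.Icc (0:ℝ) T, ∀ (X : ℕ → ℝ), ∀ i ∈ Finset.Icc 1 n,
      (∀ j ∈ Finset.Icc 1 n, |X j| ≤ B) → (∀ j ∈ Finset.Icc 1 n, np (X j) ≤ G t) → X i ≤ 0 →
      -influenceTerm n cB (fun j => S j t + E j t + Ia j t + Is j t + Ih j t + R j t) (Ntot t) X i ≤ KT * G t := by
    intro t ht X i hi hXB hXnp hXi
    have hiI : 1 ≤ i ∧ i ≤ n := Finset.mem_Icc.mp hi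
    have hLB0 : 0 ≤ CB * ((n:ℝ) * G t) :=
      mul_nonneg hCB0 (mul_nonneg (Nat.cast_nonneg n) (hG0 t))
    have b1 : -(if 2 ≤ i then (X (i - 1) / Ntot t) *
          ∑ j ∈ Finset.Icc i n, cB j (i - 1) * (S j t + E j t + Ia j t + Is j t + Ih j t + R j t)
          else 0)
        ≤ G t / c * (CB * ((n:ℝ) * B)) + B / c * (CB * ((n:ℝ) * G t)) := by
      split_ifs with hcond
      · have hi1 : i - 1 ∈ Finset.Icc 1 n := Finset.mem_Icc.mpr ⟨by omega, by omega⟩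
        have hsub : Finset.Icc i n ⊆ Finset.Icc 1 n := Finset.Icc_subset_Icc (by omega) le_rfl
        have hne : ∀ j ∈ Finset.Icc i n, j ≠ i - 1 := by
          intro j hj
          have := Finset.mem_Icc.mp hj
          omega
        obtain ⟨hu, hl⟩ := hQbd t ht (Finset.Icc i n) (i-1) hsub hi1 hne
        exact div_mul_bound hc (hcN t ht) (hXB _ hi1) (hXnp _ hi1) (hG0 t) hUB0 hLB0 hu hl
      · rw [neg_zero]
        exact add_nonneg (mul_nonneg (div_nonneg (hG0 t) hc.le) hUB0)
          (mul_nonneg (div_nonneg hB0 hc.le) hLB0)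
    have b2 : -(if i + 1 ≤ n then (X (i + 1) / Ntot t) *
          ∑ j ∈ Finset.Icc 1 i, cB j (i + 1) * (S j t + E j t + Ia j t + Is j t + Ih j t + R j t)
          else 0)
        ≤ G t / c * (CB * ((n:ℝ) * B)) + B / c * (CB * ((n:ℝ) * G t)) := by
      split_ifs with hcond
      · have hi1 : i + 1 ∈ Finset.Icc 1 n := Finset.mem_Icc.mpr ⟨by omega, hcond⟩
        have hsub : Finset.Icc 1 i ⊆ Finset.Icc 1 n := Finset.Icc_subset_Icc le_rfl (by omega)
        have hne : ∀ j ∈ Finset.Icc 1 i, j ≠ i + 1 := by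
          intro j hj
          have := Finset.mem_Icc.mp hj
          omega
        obtain ⟨hu, hl⟩ := hQbd t ht (Finset.Icc 1 i) (i+1) hsub hi1 hne
        exact div_mul_bound hc (hcN t ht) (hXB _ hi1) (hXnp _ hi1) (hG0 t) hUB0 hLB0 hu hl
      · rw [neg_zero]
        exact add_nonneg (mul_nonneg (div_nonneg (hG0 t) hc.le) hUB0)
          (mul_nonneg (div_nonneg hB0 hc.le) hLB0)
    have b3 : (X i / Ntot t) *
          ∑ j ∈ (Finset.Icc 1 n).erase i, cB j i * (S j t + E j t + Ia j t + Is j t + Ih j t + R j t)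
        ≤ B / c * (CB * ((n:ℝ) * G t)) := by
      have hsub : (Finset.Icc 1 n).erase i ⊆ Finset.Icc 1 n := Finset.erase_subset i _
      have hne : ∀ j ∈ (Finset.Icc 1 n).erase i, j ≠ i := fun j hj => (Finset.mem_erase.mp hj).1
      obtain ⟨hu, hl⟩ := hQbd t ht _ i hsub hi hne
      exact div_mul_bound_nonpos hc (hcN t ht) hXi (hXB i hi) hLB0 hl
    have hring : KT * G t = (G t / c * (CB * ((n:ℝ) * B)) + B / c * (CB * ((n:ℝ) * G t)))
        + (G t / c * (CB * ((n:ℝ) * B)) + B / c * (CB * ((n:ℝ) * G t)))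
        + B / c * (CB * ((n:ℝ) * G t)) := by
      rw [hKTdef]; ring
    unfold influenceTerm
    beta_reduce
    linarith [b1, b2, b3]
  -- exponential behaviour factor bound
  have hIhsum : ∀ t ∈ Set.Icc (0:ℝ) T, |∑ k ∈ Finset.Icc 1 n, Ih k t| ≤ (n:ℝ) * B := by
    intro t ht
    calc |∑ k ∈ Finset.Icc 1 n, Ih k t| ≤ ∑ k ∈ Finset.Icc 1 n, |Ih k t| :=
        Finset.abs_sum_le_sum_abs _ _
      _ ≤ (Finset.Icc 1 n).card • B := Finset.sum_le_card_nsmul _ _ _ (fun k hk => hIhB t ht k hk)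
      _ = (((Finset.Icc 1 n).card : ℕ) : ℝ) * B := nsmul_eq_mul _ _
      _ = (n:ℝ) * B := by rw [hcard]
  have hexp : ∀ t ∈ Set.Icc (0:ℝ) T, ∀ j ∈ Finset.Icc 1 n,
      Real.exp (-a j * (∑ k ∈ Finset.Icc 1 n, Ih k t) / Ntot t) ≤ EB := by
    intro t ht j hj
    rw [hEBdef]
    apply Real.exp_le_exp.mpr
    have h1 : -a j * (∑ k ∈ Finset.Icc 1 n, Ih k t) ≤ a j * |∑ k ∈ Finset.Icc 1 n, Ih k t| := by
      have h2 := mul_le_mul_of_nonneg_left (neg_le_abs (∑ k ∈ Finset.Icc 1 n, Ih k t)) (ha j)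
      nlinarith
    have h3 : a j * |∑ k ∈ Finset.Icc 1 n, Ih k t| ≤ Aa * ((n:ℝ) * B) :=
      mul_le_mul (hAale j hj) (hIhsum t ht) (abs_nonneg _) hAa0
    exact div_le_div₀ (mul_nonneg hAa0 (mul_nonneg (Nat.cast_nonneg n) hB0))
      (le_trans h1 h3) hc (hcN t ht)
  -- bounds on the infection pressure sum W
  set WB := βa * B + βi * B + βh * B with hWBdef
  clear_value WB
  have hWB0 : 0 ≤ WB := by
    rw [hWBdef]
    have := mul_nonneg hβa hB0; have := mul_nonneg hβi hB0; have := mul_nonneg hβh hB0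
    linarith
  have hWub : ∀ t ∈ Set.Icc (0:ℝ) T, (∑ j ∈ Finset.Icc 1 n, Real.exp (-a j * (∑ k ∈ Finset.Icc 1 n, Ih k t) / Ntot t) * (βa * Ia j t + βi * Is j t + βh * Ih j t)) ≤ (n:ℝ) * (EB * WB) := by
    intro t ht
    have helem : ∀ j ∈ Finset.Icc 1 n,
        Real.exp (-a j * (∑ k ∈ Finset.Icc 1 n, Ih k t) / Ntot t) *
          (βa * Ia j t + βi * Is j t + βh * Ih j t) ≤ EB * WB := by
      intro j hj
      have hw : βa * Ia j t + βi * Is j t + βh * Ih j t ≤ WB := by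
        rw [hWBdef]
        have i1 : βa * Ia j t ≤ βa * B :=
          mul_le_mul_of_nonneg_left (le_trans (le_abs_self _) (hIaB t ht j hj)) hβa
        have i2 : βi * Is j t ≤ βi * B :=
          mul_le_mul_of_nonneg_left (le_trans (le_abs_self _) (hIsB t ht j hj)) hβi
        have i3 : βh * Ih j t ≤ βh * B :=
          mul_le_mul_of_nonneg_left (le_trans (le_abs_self _) (hIhB t ht j hj)) hβh
        linarith
      rcases le_or_gt 0 (βa * Ia j t + βi * Is j t + βh * Ih j t) with hw0 | hw0
      · exact mul_le_mul (hexp t ht j hj) hw hw0 hEB0.le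
      · exact le_trans (mul_nonpos_of_nonneg_of_nonpos (Real.exp_nonneg _) hw0.le)
          (mul_nonneg hEB0.le hWB0)
    calc (∑ j ∈ Finset.Icc 1 n, Real.exp (-a j * (∑ k ∈ Finset.Icc 1 n, Ih k t) / Ntot t) * (βa * Ia j t + βi * Is j t + βh * Ih j t)) ≤ (Finset.Icc 1 n).card • (EB * WB) :=
        Finset.sum_le_card_nsmul _ _ _ helem
      _ = (((Finset.Icc 1 n).card : ℕ) : ℝ) * (EB * WB) := nsmul_eq_mul _ _
      _ = (n:ℝ) * (EB * WB) := by rw [hcard]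
  have hWlb : ∀ t ∈ Set.Icc (0:ℝ) T, -(∑ j ∈ Finset.Icc 1 n, Real.exp (-a j * (∑ k ∈ Finset.Icc 1 n, Ih k t) / Ntot t) * (βa * Ia j t + βi * Is j t + βh * Ih j t)) ≤ (n:ℝ) * (EB * ((βa + βi + βh) * G t)) := by
    intro t ht
    have helem : ∀ j ∈ Finset.Icc 1 n,
        -(Real.exp (-a j * (∑ k ∈ Finset.Icc 1 n, Ih k t) / Ntot t) *
          (βa * Ia j t + βi * Is j t + βh * Ih j t)) ≤ EB * ((βa + βi + βh) * G t) := by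
      intro j hj
      have hnw : -(βa * Ia j t + βi * Is j t + βh * Ih j t) ≤ (βa + βi + βh) * G t := by
        have i1 : βa * (-(Ia j t)) ≤ βa * np (Ia j t) :=
          mul_le_mul_of_nonneg_left (neg_le_np _) hβa
        have i1' : βa * np (Ia j t) ≤ βa * G t :=
          mul_le_mul_of_nonneg_left (hnpIa t j hj) hβa
        have i2 : βi * (-(Is j t)) ≤ βi * np (Is j t) :=
          mul_le_mul_of_nonneg_left (neg_le_np _) hβi
        have i2' : βi * np (Is j t) ≤ βi * G t :=
          mul_le_mul_of_nonneg_left (hnpIs t j hj) hβi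
        have i3 : βh * (-(Ih j t)) ≤ βh * np (Ih j t) :=
          mul_le_mul_of_nonneg_left (neg_le_np _) hβh
        have i3' : βh * np (Ih j t) ≤ βh * G t :=
          mul_le_mul_of_nonneg_left (hnpIh t j hj) hβh
        linarith
      have e : -(Real.exp (-a j * (∑ k ∈ Finset.Icc 1 n, Ih k t) / Ntot t) *
          (βa * Ia j t + βi * Is j t + βh * Ih j t))
          = Real.exp (-a j * (∑ k ∈ Finset.Icc 1 n, Ih k t) / Ntot t) *
            (-(βa * Ia j t + βi * Is j t + βh * Ih j t)) := by ring
      rw [e]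
      calc Real.exp (-a j * (∑ k ∈ Finset.Icc 1 n, Ih k t) / Ntot t) *
          (-(βa * Ia j t + βi * Is j t + βh * Ih j t))
          ≤ Real.exp (-a j * (∑ k ∈ Finset.Icc 1 n, Ih k t) / Ntot t) *
            ((βa + βi + βh) * G t) := mul_le_mul_of_nonneg_left hnw (Real.exp_nonneg _)
        _ ≤ EB * ((βa + βi + βh) * G t) := mul_le_mul_of_nonneg_right (hexp t ht j hj)
            (mul_nonneg (by linarith) (hG0 t))
    rw [← Finset.sum_neg_distrib]
    calc (∑ j ∈ Finset.Icc 1 n, -(Real.exp (-a j * (∑ k ∈ Finset.Icc 1 n, Ih k t) / Ntot t) *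
          (βa * Ia j t + βi * Is j t + βh * Ih j t)))
        ≤ (Finset.Icc 1 n).card • (EB * ((βa + βi + βh) * G t)) :=
        Finset.sum_le_card_nsmul _ _ _ helem
      _ = (((Finset.Icc 1 n).card : ℕ) : ℝ) * (EB * ((βa + βi + βh) * G t)) := nsmul_eq_mul _ _
      _ = (n:ℝ) * (EB * ((βa + βi + βh) * G t)) := by rw [hcard]
  -- force of infection bounds
  set KL2 := EB * (B * ((n:ℝ) * (EB * (βa + βi + βh)))) / c with hKL2def
  clear_value KL2
  set KL := EB * ((n:ℝ) * (EB * WB)) / c + EB * (B * ((n:ℝ) * (EB * (βa + βi + βh)))) / c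
    with hKLdef
  clear_value KL
  have hKL20 : 0 ≤ KL2 := by
    rw [hKL2def]
    apply div_nonneg _ hc.le
    exact mul_nonneg hEB0.le (mul_nonneg hB0 (mul_nonneg (Nat.cast_nonneg n)
      (mul_nonneg hEB0.le (by linarith))))
  have hKL0 : 0 ≤ KL := by
    rw [hKLdef]
    have h1 : 0 ≤ EB * ((n:ℝ) * (EB * WB)) / c := div_nonneg
      (mul_nonneg hEB0.le (mul_nonneg (Nat.cast_nonneg n) (mul_nonneg hEB0.le hWB0))) hc.le
    have h2 : 0 ≤ EB * (B * ((n:ℝ) * (EB * (βa + βi + βh)))) / c := div_nonneg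
      (mul_nonneg hEB0.le (mul_nonneg hB0 (mul_nonneg (Nat.cast_nonneg n)
        (mul_nonneg hEB0.le (by linarith))))) hc.le
    linarith
  have hWlb0 : ∀ t, 0 ≤ (n:ℝ) * (EB * ((βa + βi + βh) * G t)) := fun t =>
    mul_nonneg (Nat.cast_nonneg n) (mul_nonneg hEB0.le (mul_nonneg (by linarith) (hG0 t)))
  have hWub0 : 0 ≤ (n:ℝ) * (EB * WB) :=
    mul_nonneg (Nat.cast_nonneg n) (mul_nonneg hEB0.le hWB0)
  have hlamPos : ∀ t ∈ Set.Icc (0:ℝ) T, ∀ i ∈ Finset.Icc 1 n, S i t ≤ 0 →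
      forceOfInfection n βa βi βh θl a (Ntot t) (fun j => S j t) (fun j => Ia j t) (fun j => Is j t) (fun j => Ih j t) i ≤ KL2 * G t := by
    intro t ht i hi hx
    unfold forceOfInfection
    beta_reduce
    have hrw : θl * Real.exp (-a i * (∑ k ∈ Finset.Icc 1 n, Ih k t) / Ntot t) * (S i t / Ntot t) * (∑ j ∈ Finset.Icc 1 n, Real.exp (-a j * (∑ k ∈ Finset.Icc 1 n, Ih k t) / Ntot t) * (βa * Ia j t + βi * Is j t + βh * Ih j t))
        = (θl * Real.exp (-a i * (∑ k ∈ Finset.Icc 1 n, Ih k t) / Ntot t)) * (S i t / Ntot t * (∑ j ∈ Finset.Icc 1 n, Real.exp (-a j * (∑ k ∈ Finset.Icc 1 n, Ih k t) / Ntot t) * (βa * Ia j t + βi * Is j t + βh * Ih j t))) := by ring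
    rw [hrw]
    have hpE0 : 0 ≤ θl * Real.exp (-a i * (∑ k ∈ Finset.Icc 1 n, Ih k t) / Ntot t) := mul_nonneg hθ0.le (Real.exp_nonneg _)
    have hpEB : θl * Real.exp (-a i * (∑ k ∈ Finset.Icc 1 n, Ih k t) / Ntot t) ≤ EB := by
      calc θl * Real.exp (-a i * (∑ k ∈ Finset.Icc 1 n, Ih k t) / Ntot t) ≤ 1 * EB :=
          mul_le_mul hθ1 (hexp t ht i hi) (Real.exp_nonneg _) zero_le_one
        _ = EB := one_mul _
    have hin : S i t / Ntot t * (∑ j ∈ Finset.Icc 1 n, Real.exp (-a j * (∑ k ∈ Finset.Icc 1 n, Ih k t) / Ntot t) * (βa * Ia j t + βi * Is j t + βh * Ih j t)) ≤ B / c * ((n:ℝ) * (EB * ((βa + βi + βh) * G t))) :=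
      div_mul_bound_nonpos hc (hcN t ht) hx (hSB t ht i hi) (hWlb0 t) (hWlb t ht)
    calc (θl * Real.exp (-a i * (∑ k ∈ Finset.Icc 1 n, Ih k t) / Ntot t)) * (S i t / Ntot t * (∑ j ∈ Finset.Icc 1 n, Real.exp (-a j * (∑ k ∈ Finset.Icc 1 n, Ih k t) / Ntot t) * (βa * Ia j t + βi * Is j t + βh * Ih j t)))
        ≤ (θl * Real.exp (-a i * (∑ k ∈ Finset.Icc 1 n, Ih k t) / Ntot t)) * (B / c * ((n:ℝ) * (EB * ((βa + βi + βh) * G t)))) :=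
          mul_le_mul_of_nonneg_left hin hpE0
      _ ≤ EB * (B / c * ((n:ℝ) * (EB * ((βa + βi + βh) * G t)))) :=
          mul_le_mul_of_nonneg_right hpEB
            (mul_nonneg (div_nonneg hB0 hc.le) (hWlb0 t))
      _ = KL2 * G t := by rw [hKL2def]; ring
  have hlamNeg : ∀ t ∈ Set.Icc (0:ℝ) T, ∀ i ∈ Finset.Icc 1 n,
      -forceOfInfection n βa βi βh θl a (Ntot t) (fun j => S j t) (fun j => Ia j t) (fun j => Is j t) (fun j => Ih j t) i ≤ KL * G t := by
    intro t ht i hi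
    unfold forceOfInfection
    beta_reduce
    have hrw : -(θl * Real.exp (-a i * (∑ k ∈ Finset.Icc 1 n, Ih k t) / Ntot t) * (S i t / Ntot t) * (∑ j ∈ Finset.Icc 1 n, Real.exp (-a j * (∑ k ∈ Finset.Icc 1 n, Ih k t) / Ntot t) * (βa * Ia j t + βi * Is j t + βh * Ih j t)))
        = (θl * Real.exp (-a i * (∑ k ∈ Finset.Icc 1 n, Ih k t) / Ntot t)) * (-(S i t / Ntot t * (∑ j ∈ Finset.Icc 1 n, Real.exp (-a j * (∑ k ∈ Finset.Icc 1 n, Ih k t) / Ntot t) * (βa * Ia j t + βi * Is j t + βh * Ih j t)))) := by ring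
    rw [hrw]
    have hpE0 : 0 ≤ θl * Real.exp (-a i * (∑ k ∈ Finset.Icc 1 n, Ih k t) / Ntot t) := mul_nonneg hθ0.le (Real.exp_nonneg _)
    have hpEB : θl * Real.exp (-a i * (∑ k ∈ Finset.Icc 1 n, Ih k t) / Ntot t) ≤ EB := by
      calc θl * Real.exp (-a i * (∑ k ∈ Finset.Icc 1 n, Ih k t) / Ntot t) ≤ 1 * EB :=
          mul_le_mul hθ1 (hexp t ht i hi) (Real.exp_nonneg _) zero_le_one
        _ = EB := one_mul _
    have hin : -(S i t / Ntot t * (∑ j ∈ Finset.Icc 1 n, Real.exp (-a j * (∑ k ∈ Finset.Icc 1 n, Ih k t) / Ntot t) * (βa * Ia j t + βi * Is j t + βh * Ih j t))) ≤ G t / c * ((n:ℝ) * (EB * WB))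
        + B / c * ((n:ℝ) * (EB * ((βa + βi + βh) * G t))) :=
      div_mul_bound hc (hcN t ht) (hSB t ht i hi) (hnpS t i hi) (hG0 t) hWub0 (hWlb0 t)
        (hWub t ht) (hWlb t ht)
    calc (θl * Real.exp (-a i * (∑ k ∈ Finset.Icc 1 n, Ih k t) / Ntot t)) * (-(S i t / Ntot t * (∑ j ∈ Finset.Icc 1 n, Real.exp (-a j * (∑ k ∈ Finset.Icc 1 n, Ih k t) / Ntot t) * (βa * Ia j t + βi * Is j t + βh * Ih j t))))
        ≤ (θl * Real.exp (-a i * (∑ k ∈ Finset.Icc 1 n, Ih k t) / Ntot t)) * (G t / c * ((n:ℝ) * (EB * WB))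
            + B / c * ((n:ℝ) * (EB * ((βa + βi + βh) * G t)))) :=
          mul_le_mul_of_nonneg_left hin hpE0
      _ ≤ EB * (G t / c * ((n:ℝ) * (EB * WB))
            + B / c * ((n:ℝ) * (EB * ((βa + βi + βh) * G t)))) :=
          mul_le_mul_of_nonneg_right hpEB (add_nonneg
            (mul_nonneg (div_nonneg (hG0 t) hc.le) hWub0)
            (mul_nonneg (div_nonneg hB0 hc.le) (hWlb0 t)))
      _ = KL * G t := by rw [hKLdef]; ring
  -- the master constant A
  set A := ξ + σe + σi + γa + γh + KL + KL2 + KT with hAdef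
  clear_value A
  have hA0 : 0 ≤ A := by
    rw [hAdef]
    linarith [hKL0, hKL20, hKT0, hξ, hσe, hσi, hγa, hγh]
  have hkeyS : ∀ t ∈ Set.Icc (0:ℝ) T, ∀ i ∈ Finset.Icc 1 n, S i t ≤ 0 →
      -(ξ * R i t - forceOfInfection n βa βi βh θl a (Ntot t) (fun j => S j t) (fun j => Ia j t) (fun j => Is j t) (fun j => Ih j t) i + influenceTerm n cB (fun j => S j t + E j t + Ia j t + Is j t + Ih j t + R j t) (Ntot t) (fun j => S j t) i) ≤ A * G t := by
    intro t ht i hi hx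
    have h3 := hinfl t ht (fun j => S j t) i hi (fun j hj => hSB t ht j hj)
      (fun j hj => hnpS t j hj) hx
    rw [hAdef]
    have h1 : ξ * (-(R i t)) ≤ ξ * np (R i t) := mul_le_mul_of_nonneg_left (neg_le_np _) hξ
    have h1' : ξ * np (R i t) ≤ ξ * G t := mul_le_mul_of_nonneg_left (hnpR t i hi) hξ
    have h2 := hlamPos t ht i hi hx
    linarith [hG0 t, mul_nonneg hσe (hG0 t), mul_nonneg hσi (hG0 t), mul_nonneg hγa (hG0 t),
      mul_nonneg hγh (hG0 t), mul_nonneg hKL0 (hG0 t)]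
  have hkeyE : ∀ t ∈ Set.Icc (0:ℝ) T, ∀ i ∈ Finset.Icc 1 n, E i t ≤ 0 →
      -(forceOfInfection n βa βi βh θl a (Ntot t) (fun j => S j t) (fun j => Ia j t) (fun j => Is j t) (fun j => Ih j t) i - σe * E i t + influenceTerm n cB (fun j => S j t + E j t + Ia j t + Is j t + Ih j t + R j t) (Ntot t) (fun j => E j t) i) ≤ A * G t := by
    intro t ht i hi hx
    have h3 := hinfl t ht (fun j => E j t) i hi (fun j hj => hEB t ht j hj)
      (fun j hj => hnpE t j hj) hx
    rw [hAdef]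
    have h1 : σe * E i t ≤ 0 := mul_nonpos_of_nonneg_of_nonpos hσe hx
    have h2 := hlamNeg t ht i hi
    linarith [hG0 t, mul_nonneg hσe (hG0 t), mul_nonneg hσi (hG0 t), mul_nonneg hγa (hG0 t),
      mul_nonneg hγh (hG0 t), mul_nonneg hKL20 (hG0 t), mul_nonneg hξ (hG0 t)]
  have hkeyIa : ∀ t ∈ Set.Icc (0:ℝ) T, ∀ i ∈ Finset.Icc 1 n, Ia i t ≤ 0 →
      -((1 - r) * σe * E i t - γa * Ia i t + influenceTerm n cB (fun j => S j t + E j t + Ia j t + Is j t + Ih j t + R j t) (Ntot t) (fun j => Ia j t) i) ≤ A * G t := by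
    intro t ht i hi hx
    have h3 := hinfl t ht (fun j => Ia j t) i hi (fun j hj => hIaB t ht j hj)
      (fun j hj => hnpIa t j hj) hx
    rw [hAdef]
    have hco : 0 ≤ (1 - r) * σe := mul_nonneg (by linarith) hσe
    have h1 : ((1 - r) * σe) * (-(E i t)) ≤ ((1 - r) * σe) * np (E i t) :=
      mul_le_mul_of_nonneg_left (neg_le_np _) hco
    have h1' : ((1 - r) * σe) * np (E i t) ≤ ((1 - r) * σe) * G t :=
      mul_le_mul_of_nonneg_left (hnpE t i hi) hco
    have h1'' : ((1 - r) * σe) * G t ≤ σe * G t :=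
      mul_le_mul_of_nonneg_right (by nlinarith [mul_nonneg hr0 hσe]) (hG0 t)
    have h2 : γa * Ia i t ≤ 0 := mul_nonpos_of_nonneg_of_nonpos hγa hx
    linarith [hG0 t, mul_nonneg hσi (hG0 t), mul_nonneg hγa (hG0 t),
      mul_nonneg hγh (hG0 t), mul_nonneg hKL0 (hG0 t), mul_nonneg hKL20 (hG0 t),
      mul_nonneg hξ (hG0 t)]
  have hkeyIs : ∀ t ∈ Set.Icc (0:ℝ) T, ∀ i ∈ Finset.Icc 1 n, Is i t ≤ 0 →
      -(r * σe * E i t - σi * Is i t + influenceTerm n cB (fun j => S j t + E j t + Ia j t + Is j t + Ih j t + R j t) (Ntot t) (fun j => Is j t) i) ≤ A * G t := by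
    intro t ht i hi hx
    have h3 := hinfl t ht (fun j => Is j t) i hi (fun j hj => hIsB t ht j hj)
      (fun j hj => hnpIs t j hj) hx
    rw [hAdef]
    have hco : 0 ≤ r * σe := mul_nonneg hr0 hσe
    have h1 : (r * σe) * (-(E i t)) ≤ (r * σe) * np (E i t) :=
      mul_le_mul_of_nonneg_left (neg_le_np _) hco
    have h1' : (r * σe) * np (E i t) ≤ (r * σe) * G t :=
      mul_le_mul_of_nonneg_left (hnpE t i hi) hco
    have h1'' : (r * σe) * G t ≤ σe * G t :=
      mul_le_mul_of_nonneg_right (by nlinarith [mul_nonneg (sub_nonneg.mpr hr1) hσe]) (hG0 t)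
    have h2 : σi * Is i t ≤ 0 := mul_nonpos_of_nonneg_of_nonpos hσi hx
    linarith [hG0 t, mul_nonneg hσi (hG0 t), mul_nonneg hγa (hG0 t),
      mul_nonneg hγh (hG0 t), mul_nonneg hKL0 (hG0 t), mul_nonneg hKL20 (hG0 t),
      mul_nonneg hξ (hG0 t)]
  have hkeyIh : ∀ t ∈ Set.Icc (0:ℝ) T, ∀ i ∈ Finset.Icc 1 n, Ih i t ≤ 0 →
      -(q * σi * Is i t - (γh + δh) * Ih i t + influenceTerm n cB (fun j => S j t + E j t + Ia j t + Is j t + Ih j t + R j t) (Ntot t) (fun j => Ih j t) i) ≤ A * G t := by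
    intro t ht i hi hx
    have h3 := hinfl t ht (fun j => Ih j t) i hi (fun j hj => hIhB t ht j hj)
      (fun j hj => hnpIh t j hj) hx
    rw [hAdef]
    have hco : 0 ≤ q * σi := mul_nonneg hq0 hσi
    have h1 : (q * σi) * (-(Is i t)) ≤ (q * σi) * np (Is i t) :=
      mul_le_mul_of_nonneg_left (neg_le_np _) hco
    have h1' : (q * σi) * np (Is i t) ≤ (q * σi) * G t :=
      mul_le_mul_of_nonneg_left (hnpIs t i hi) hco
    have h1'' : (q * σi) * G t ≤ σi * G t :=
      mul_le_mul_of_nonneg_right (by nlinarith [mul_nonneg (sub_nonneg.mpr hq1) hσi]) (hG0 t)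
    have h2 : (γh + δh) * Ih i t ≤ 0 := mul_nonpos_of_nonneg_of_nonpos (by linarith) hx
    linarith [hG0 t, mul_nonneg hσe (hG0 t), mul_nonneg hγa (hG0 t),
      mul_nonneg hγh (hG0 t), mul_nonneg hKL0 (hG0 t), mul_nonneg hKL20 (hG0 t),
      mul_nonneg hξ (hG0 t)]
  have hkeyR : ∀ t ∈ Set.Icc (0:ℝ) T, ∀ i ∈ Finset.Icc 1 n, R i t ≤ 0 →
      -(γa * Ia i t + (1 - q) * σi * Is i t + γh * Ih i t - ξ * R i t + influenceTerm n cB (fun j => S j t + E j t + Ia j t + Is j t + Ih j t + R j t) (Ntot t) (fun j => R j t) i) ≤ A * G t := by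
    intro t ht i hi hx
    have h3 := hinfl t ht (fun j => R j t) i hi (fun j hj => hRB t ht j hj)
      (fun j hj => hnpR t j hj) hx
    rw [hAdef]
    have h1 : γa * (-(Ia i t)) ≤ γa * np (Ia i t) := mul_le_mul_of_nonneg_left (neg_le_np _) hγa
    have h1' : γa * np (Ia i t) ≤ γa * G t := mul_le_mul_of_nonneg_left (hnpIa t i hi) hγa
    have hco : 0 ≤ (1 - q) * σi := mul_nonneg (by linarith) hσi
    have h2 : ((1 - q) * σi) * (-(Is i t)) ≤ ((1 - q) * σi) * np (Is i t) :=
      mul_le_mul_of_nonneg_left (neg_le_np _) hco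
    have h2' : ((1 - q) * σi) * np (Is i t) ≤ ((1 - q) * σi) * G t :=
      mul_le_mul_of_nonneg_left (hnpIs t i hi) hco
    have h2'' : ((1 - q) * σi) * G t ≤ σi * G t :=
      mul_le_mul_of_nonneg_right (by nlinarith [mul_nonneg hq0 hσi]) (hG0 t)
    have h3a : γh * (-(Ih i t)) ≤ γh * np (Ih i t) := mul_le_mul_of_nonneg_left (neg_le_np _) hγh
    have h3a' : γh * np (Ih i t) ≤ γh * G t := mul_le_mul_of_nonneg_left (hnpIh t i hi) hγh
    have h4 : ξ * R i t ≤ 0 := mul_nonpos_of_nonneg_of_nonpos hξ hx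
    linarith [hG0 t, mul_nonneg hσe (hG0 t), mul_nonneg hσi (hG0 t),
      mul_nonneg hKL0 (hG0 t), mul_nonneg hKL20 (hG0 t), mul_nonneg hξ (hG0 t)]
  have hGsq : ∀ t, (G t)^2 ≤ 6 * (n:ℝ) * (∑ i ∈ Finset.Icc 1 n, ((min (S i t) 0)^2 + (min (E i t) 0)^2 + (min (Ia i t) 0)^2 + (min (Is i t) 0)^2 + (min (Ih i t) 0)^2 + (min (R i t) 0)^2)) := by
    intro t
    simp only [hGdef]
    calc (∑ i ∈ Finset.Icc 1 n, (np (S i t) + np (E i t) + np (Ia i t) + np (Is i t) + np (Ih i t) + np (R i t)))^2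
        ≤ ((Finset.Icc 1 n).card : ℝ) * ∑ i ∈ Finset.Icc 1 n, (np (S i t) + np (E i t) + np (Ia i t) + np (Is i t) + np (Ih i t) + np (R i t))^2 :=
          sq_sum_le_card_mul_sum_sq
      _ ≤ ((Finset.Icc 1 n).card : ℝ) * ∑ i ∈ Finset.Icc 1 n, 6 * ((min (S i t) 0)^2 + (min (E i t) 0)^2 + (min (Ia i t) 0)^2 + (min (Is i t) 0)^2 + (min (Ih i t) 0)^2 + (min (R i t) 0)^2) := by
          apply mul_le_mul_of_nonneg_left _ (Nat.cast_nonneg _)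
          apply Finset.sum_le_sum
          intro i _
          have h6 := six_sq (np (S i t)) (np (E i t)) (np (Ia i t)) (np (Is i t))
            (np (Ih i t)) (np (R i t))
          rw [np_sq_eq, np_sq_eq, np_sq_eq, np_sq_eq, np_sq_eq, np_sq_eq] at h6
          exact h6
      _ = (((Finset.Icc 1 n).card : ℕ) : ℝ) * (6 * ∑ i ∈ Finset.Icc 1 n, ((min (S i t) 0)^2 + (min (E i t) 0)^2 + (min (Ia i t) 0)^2 + (min (Is i t) 0)^2 + (min (Ih i t) 0)^2 + (min (R i t) 0)^2)) := by
          rw [← Finset.mul_sum]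
      _ = 6 * (n:ℝ) * (∑ i ∈ Finset.Icc 1 n, ((min (S i t) 0)^2 + (min (E i t) 0)^2 + (min (Ia i t) 0)^2 + (min (Is i t) 0)^2 + (min (Ih i t) 0)^2 + (min (R i t) 0)^2)) := by rw [hcard]; ring
  -- the squared negative-part functional is nonpositive on [0,T]
  have hgle : ∀ t ∈ Set.Icc (0:ℝ) T,
      (∑ i ∈ Finset.Icc 1 n, ((min (S i t) 0)^2 + (min (E i t) 0)^2 + (min (Ia i t) 0)^2 + (min (Is i t) 0)^2 + (min (Ih i t) 0)^2 + (min (R i t) 0)^2)) ≤ 0 := by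
    apply nonpos_of_deriv_le_mul (K := 72 * (n:ℝ)^2 * A)
      (g := fun t => ∑ i ∈ Finset.Icc 1 n, ((min (S i t) 0)^2 + (min (E i t) 0)^2 + (min (Ia i t) 0)^2 + (min (Is i t) 0)^2 + (min (Ih i t) 0)^2 + (min (R i t) 0)^2))
    · intro t ht
      refine ⟨_, HasDerivAt.fun_sum (fun i hi =>
        ((((((hasDerivAt_minsq (S i t)).comp t (hS i hi t ht)).add
            ((hasDerivAt_minsq (E i t)).comp t (hE i hi t ht))).add
            ((hasDerivAt_minsq (Ia i t)).comp t (hIa i hi t ht))).add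
            ((hasDerivAt_minsq (Is i t)).comp t (hIs i hi t ht))).add
            ((hasDerivAt_minsq (Ih i t)).comp t (hIh i hi t ht))).add
            ((hasDerivAt_minsq (R i t)).comp t (hR i hi t ht))), ?_⟩
      have hsumle : (∑ i ∈ Finset.Icc 1 n,
          (2 * min (S i t) 0 * (ξ * R i t - forceOfInfection n βa βi βh θl a (Ntot t) (fun j => S j t) (fun j => Ia j t) (fun j => Is j t) (fun j => Ih j t) i + influenceTerm n cB (fun j => S j t + E j t + Ia j t + Is j t + Ih j t + R j t) (Ntot t) (fun j => S j t) i)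
            + 2 * min (E i t) 0 * (forceOfInfection n βa βi βh θl a (Ntot t) (fun j => S j t) (fun j => Ia j t) (fun j => Is j t) (fun j => Ih j t) i - σe * E i t + influenceTerm n cB (fun j => S j t + E j t + Ia j t + Is j t + Ih j t + R j t) (Ntot t) (fun j => E j t) i)
            + 2 * min (Ia i t) 0 * ((1 - r) * σe * E i t - γa * Ia i t + influenceTerm n cB (fun j => S j t + E j t + Ia j t + Is j t + Ih j t + R j t) (Ntot t) (fun j => Ia j t) i)
            + 2 * min (Is i t) 0 * (r * σe * E i t - σi * Is i t + influenceTerm n cB (fun j => S j t + E j t + Ia j t + Is j t + Ih j t + R j t) (Ntot t) (fun j => Is j t) i)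
            + 2 * min (Ih i t) 0 * (q * σi * Is i t - (γh + δh) * Ih i t + influenceTerm n cB (fun j => S j t + E j t + Ia j t + Is j t + Ih j t + R j t) (Ntot t) (fun j => Ih j t) i)
            + 2 * min (R i t) 0 * (γa * Ia i t + (1 - q) * σi * Is i t + γh * Ih i t - ξ * R i t + influenceTerm n cB (fun j => S j t + E j t + Ia j t + Is j t + Ih j t + R j t) (Ntot t) (fun j => R j t) i)))
          ≤ (∑ _i ∈ Finset.Icc 1 n, 12 * (A * (G t)^2)) := by
        apply Finset.sum_le_sum
        intro i hi
        have t1 := term_bd hA0 (hG0 t) (hnpS t i hi) (fun hx => hkeyS t ht i hi hx)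
        have t2 := term_bd hA0 (hG0 t) (hnpE t i hi) (fun hx => hkeyE t ht i hi hx)
        have t3 := term_bd hA0 (hG0 t) (hnpIa t i hi) (fun hx => hkeyIa t ht i hi hx)
        have t4 := term_bd hA0 (hG0 t) (hnpIs t i hi) (fun hx => hkeyIs t ht i hi hx)
        have t5 := term_bd hA0 (hG0 t) (hnpIh t i hi) (fun hx => hkeyIh t ht i hi hx)
        have t6 := term_bd hA0 (hG0 t) (hnpR t i hi) (fun hx => hkeyR t ht i hi hx)
        linarith
      refine le_trans hsumle ?_
      rw [Finset.sum_const, nsmul_eq_mul, hcard]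
      have h1 := mul_le_mul_of_nonneg_left (hGsq t)
        (mul_nonneg (mul_nonneg (by norm_num : (0:ℝ) ≤ 12) hA0) (Nat.cast_nonneg (α := ℝ) n))
      linarith [h1]
    · apply le_of_eq
      apply Finset.sum_eq_zero
      intro i hi
      obtain ⟨h1, h2, h3, h4, h5, h6⟩ := hinit i hi
      rw [min_eq_right h1, min_eq_right h2, min_eq_right h3, min_eq_right h4,
        min_eq_right h5, min_eq_right h6]
      norm_num
  -- componentwise nonnegativity
  have hnonneg : ∀ i ∈ Finset.Icc 1 n, ∀ t ∈ Set.Icc (0:ℝ) T,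
      0 ≤ S i t ∧ 0 ≤ E i t ∧ 0 ≤ Ia i t ∧ 0 ≤ Is i t ∧ 0 ≤ Ih i t ∧ 0 ≤ R i t := by
    intro i hi t ht
    have hzero : (∑ i ∈ Finset.Icc 1 n, ((min (S i t) 0)^2 + (min (E i t) 0)^2 + (min (Ia i t) 0)^2 + (min (Is i t) 0)^2 + (min (Ih i t) 0)^2 + (min (R i t) 0)^2)) = 0 :=
      le_antisymm (hgle t ht) (Finset.sum_nonneg (fun j _ => by positivity))
    have hz := (Finset.sum_eq_zero_iff_of_nonneg (fun j _ => by positivity)).mp hzero i hi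
    exact nonneg_of_sq_sum_six hz
  -- monotonicity of the total population
  have hpart2 : ∀ t ∈ Set.Icc (0:ℝ) T, Ntot t - Ntot 0 ≤ 0 := by
    apply nonpos_of_deriv_le_mul (K := 0)
    · intro t ht
      have hd : HasDerivAt Ntot (∑ i ∈ Finset.Icc 1 n, ((ξ * R i t - forceOfInfection n βa βi βh θl a (Ntot t) (fun j => S j t) (fun j => Ia j t) (fun j => Is j t) (fun j => Ih j t) i + influenceTerm n cB (fun j => S j t + E j t + Ia j t + Is j t + Ih j t + R j t) (Ntot t) (fun j => S j t) i) + (forceOfInfection n βa βi βh θl a (Ntot t) (fun j => S j t) (fun j => Ia j t) (fun j => Is j t) (fun j => Ih j t) i - σe * E i t + influenceTerm n cB (fun j => S j t + E j t + Ia j t + Is j t + Ih j t + R j t) (Ntot t) (fun j => E j t) i) + ((1 - r) * σe * E i t - γa * Ia i t + influenceTerm n cB (fun j => S j t + E j t + Ia j t + Is j t + Ih j t + R j t) (Ntot t) (fun j => Ia j t) i) + (r * σe * E i t - σi * Is i t + influenceTerm n cB (fun j => S j t + E j t + Ia j t + Is j t + Ih j t + R j t) (Ntot t) (fun j => Is j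 t) i) + (q * σi * Is i t - (γh + δh) * Ih i t + influenceTerm n cB (fun j => S j t + E j t + Ia j t + Is j t + Ih j t + R j t) (Ntot t) (fun j => Ih j t) i) + (γa * Ia i t + (1 - q) * σi * Is i t + γh * Ih i t - ξ * R i t + influenceTerm n cB (fun j => S j t + E j t + Ia j t + Is j t + Ih j t + R j t) (Ntot t) (fun j => R j t) i))) t := by
        have hd0 := HasDerivAt.fun_sum (u := Finset.Icc 1 n) (fun i hi =>
          (((((hS i hi t ht).add (hE i hi t ht)).add (hIa i hi t ht)).add
            (hIs i hi t ht)).add (hIh i hi t ht)).add (hR i hi t ht))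
        exact hd0.congr_of_eventuallyEq (Filter.Eventually.of_forall hNtot)
      refine ⟨_, hd.sub_const (Ntot 0), ?_⟩
      rw [zero_mul]
      have hstep : ∀ i ∈ Finset.Icc 1 n, ((ξ * R i t - forceOfInfection n βa βi βh θl a (Ntot t) (fun j => S j t) (fun j => Ia j t) (fun j => Is j t) (fun j => Ih j t) i + influenceTerm n cB (fun j => S j t + E j t + Ia j t + Is j t + Ih j t + R j t) (Ntot t) (fun j => S j t) i) + (forceOfInfection n βa βi βh θl a (Ntot t) (fun j => S j t) (fun j => Ia j t) (fun j => Is j t) (fun j => Ih j t) i - σe * E i t + influenceTerm n cB (fun j => S j t + E j t + Ia j t + Is j t + Ih j t + R j t) (Ntot t) (fun j => E j t) i) + ((1 - r) * σe * E i t - γa * Ia i t + influenceTerm n cB (fun j => S j t + E j t + Ia j t + Is j t + Ih j t + R j t) (Ntot t) (fun j => Ia j t) i) + (r * σe * E i t - σi * Is i t + influenceTerm n cB (fun j => S j t + E j t + Ia j t + Is j t + Ih j t + R j t) (Ntot t) (fun j => Is j t) i) + (q * σi * Is i t - (γh + δh) * Ih i t + influenceTerm n cB (fun j => S j t + E j t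 + Ia j t + Is j t + Ih j t + R j t) (Ntot t) (fun j => Ih j t) i) + (γa * Ia i t + (1 - q) * σi * Is i t + γh * Ih i t - ξ * R i t + influenceTerm n cB (fun j => S j t + E j t + Ia j t + Is j t + Ih j t + R j t) (Ntot t) (fun j => R j t) i)) = -(δh * Ih i t) + (influenceTerm n cB (fun j => S j t + E j t + Ia j t + Is j t + Ih j t + R j t) (Ntot t) (fun j => S j t) i + influenceTerm n cB (fun j => S j t + E j t + Ia j t + Is j t + Ih j t + R j t) (Ntot t) (fun j => E j t) i + influenceTerm n cB (fun j => S j t + E j t + Ia j t + Is j t + Ih j t + R j t) (Ntot t) (fun j => Ia j t) i + influenceTerm n cB (fun j => S j t + E j t + Ia j t + Is j t + Ih j t + R j t) (Ntot t) (fun j => Is j t) i + influenceTerm n cB (fun j => S j t + E j t + Ia j t + Is j t + Ih j t + R j t) (Ntot t) (fun j => Ih j t) i + influenceTerm n cB (fun j => S j t + E j t + Ia j t + Is j t + Ih j t + R j t) (Ntot t) (fun j => R j t) i) := by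
        intro i hi
        ring
      rw [Finset.sum_congr rfl hstep, Finset.sum_add_distrib]
      have hz1 : (∑ i ∈ Finset.Icc 1 n, (influenceTerm n cB (fun j => S j t + E j t + Ia j t + Is j t + Ih j t + R j t) (Ntot t) (fun j => S j t) i + influenceTerm n cB (fun j => S j t + E j t + Ia j t + Is j t + Ih j t + R j t) (Ntot t) (fun j => E j t) i + influenceTerm n cB (fun j => S j t + E j t + Ia j t + Is j t + Ih j t + R j t) (Ntot t) (fun j => Ia j t) i + influenceTerm n cB (fun j => S j t + E j t + Ia j t + Is j t + Ih j t + R j t) (Ntot t) (fun j => Is j t) i + influenceTerm n cB (fun j => S j t + E j t + Ia j t + Is j t + Ih j t + R j t) (Ntot t) (fun j => Ih j t) i + influenceTerm n cB (fun j => S j t + E j t + Ia j t + Is j t + Ih j t + R j t) (Ntot t) (fun j => R j t) i)) = 0 := by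
        rw [Finset.sum_add_distrib, Finset.sum_add_distrib, Finset.sum_add_distrib,
          Finset.sum_add_distrib, Finset.sum_add_distrib]
        rw [sum_influenceTerm, sum_influenceTerm, sum_influenceTerm, sum_influenceTerm,
          sum_influenceTerm, sum_influenceTerm]
        norm_num
      rw [hz1, add_zero]
      apply Finset.sum_nonpos
      intro i hi
      have hIh0 : 0 ≤ Ih i t := (hnonneg i hi t ht).2.2.2.2.1
      have := mul_nonneg hδh hIh0
      linarith
    · simp
  exact ⟨hnonneg, fun t ht => ⟨hNpos t ht, by have := hpart2 t ht; linarith⟩⟩
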